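/- Fix a prime p. Let R be the graded polynomial algebra over a field with exactly one generator in each degree p^i for i ≥ 0, so the dimension of R in degree n equals the number of partitions of n into powers of p. Then the logarithm of dim R_n equals (1/(2 log p)) (log n)^2 + O(log log n · log n). -/

import Mathlib

/-- The number of partitions of `n` into powers of the prime `p`, i.e. the dimension in
degree `n` of a graded polynomial algebra with one generator in each degree `p^i`. -/
noncomputable def pPowerPartitions (p n : ℕ) : ℕ :=
  Nat.card {P : n.Partition // ∀ i ∈ P.parts, ∃ k : ℕ, i = p ^ k}

open Finset Real

lemma count_mul_le_sum (s : Multiset ℕ) (a : ℕ) : s.count a * a ≤ s.sum := by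
  have h : s.filter (· = a) ≤ s := Multiset.filter_le _ s
  obtain ⟨u, hu⟩ := Multiset.le_iff_exists_add.mp h
  have : (s.filter (· = a)).sum ≤ s.sum := by
    calc (s.filter (· = a)).sum ≤ (s.filter (· = a)).sum + u.sum := Nat.le_add_right _ _
    _ = s.sum := by rw [← Multiset.sum_add, ← hu]
  rwa [Multiset.filter_eq', Multiset.sum_replicate, smul_eq_mul] at this

lemma ppp_upper (p n : ℕ) (hp : 2 ≤ p) (hn : 1 ≤ n) :
    pPowerPartitions p n ≤ ∏ i ∈ Finset.range (Nat.log p n + 1), (n / p ^ i + 1) := by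
  set K := Nat.log p n with hK
  have hcount : ∀ (P : {P : n.Partition // ∀ i ∈ P.parts, ∃ k : ℕ, i = p ^ k}) (i : ℕ),
      P.1.parts.count (p ^ i) ≤ n / p ^ i := by
    intro P i
    rw [Nat.le_div_iff_mul_le (Nat.pow_pos_iff.mpr (Or.inl (by omega)))]
    calc P.1.parts.count (p ^ i) * p ^ i ≤ P.1.parts.sum := count_mul_le_sum _ _
    _ = n := P.1.parts_sum
  have key : pPowerPartitions p n ≤
      Nat.card (∀ i : Fin (K + 1), Fin (n / p ^ (i : ℕ) + 1)) := by
    apply Nat.card_le_card_of_injective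
      (fun (P : {P : n.Partition // ∀ i ∈ P.parts, ∃ k : ℕ, i = p ^ k}) (i : Fin (K + 1)) =>
        (⟨P.1.parts.count (p ^ (i : ℕ)), Nat.lt_succ_of_le (hcount P i)⟩ :
        Fin (n / p ^ (i : ℕ) + 1)))
    intro P Q h
    apply Subtype.ext
    ext j
    by_cases hj : ∃ k ≤ K, j = p ^ k
    · obtain ⟨k, hk, rfl⟩ := hj
      have := congrFun h ⟨k, by omega⟩
      simpa using congrArg Fin.val this
    · have hnotmem : ∀ (R : {P : n.Partition // ∀ i ∈ P.parts, ∃ k : ℕ, i = p ^ k}),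
          j ∉ R.1.parts := by
        intro R hmem
        obtain ⟨k, rfl⟩ := R.2 j hmem
        have hle : p ^ k ≤ n := by
          calc p ^ k ≤ R.1.parts.sum :=
            Multiset.single_le_sum (fun x _ => Nat.zero_le x) _ hmem
          _ = n := R.1.parts_sum
        exact hj ⟨k, (Nat.le_log_iff_pow_le (by omega) (by omega)).mpr hle, rfl⟩
      rw [Multiset.count_eq_zero_of_notMem (hnotmem P),
        Multiset.count_eq_zero_of_notMem (hnotmem Q)]
  calc pPowerPartitions p n ≤ _ := key
  _ = ∏ i ∈ Finset.range (K + 1), (n / p ^ i + 1) := by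
      rw [Nat.card_pi]
      simp [Fin.prod_univ_eq_prod_range (fun i => n / p ^ i + 1) (K+1)]

lemma ppp_lower (p n : ℕ) (hp : 2 ≤ p) (hn : 1 ≤ n) :
    ∏ i ∈ Finset.range (Nat.log p n), (n / ((Nat.log p n + 1) * p ^ (i + 1)) + 1) ≤
      pPowerPartitions p n := by
  set K := Nat.log p n with hK
  set M : ℕ → ℕ := fun i => n / ((K + 1) * p ^ (i + 1)) with hM
  set S : ((i : Fin K) → Fin (M i + 1)) → ℕ :=
    fun f => ∑ i : Fin K, (f i : ℕ) * p ^ ((i : ℕ) + 1) with hS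
  have hSle : ∀ f, S f ≤ n := by
    intro f
    have h2 : ∀ i : Fin K, (f i : ℕ) * p ^ ((i : ℕ) + 1) ≤ n / (K + 1) := by
      intro i
      have h1 : (f i : ℕ) ≤ M (i : ℕ) := Nat.lt_succ_iff.mp (f i).2
      calc (f i : ℕ) * p ^ ((i : ℕ) + 1) ≤ M (i : ℕ) * p ^ ((i : ℕ) + 1) :=
            Nat.mul_le_mul_right _ h1
        _ ≤ n / (K + 1) := by
            rw [hM]
            simp only [← Nat.div_div_eq_div_mul]
            exact Nat.div_mul_le_self _ _
    calc S f ≤ ∑ _i : Fin K, n / (K + 1) := Finset.sum_le_sum (fun i _ => h2 i)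
      _ = K * (n / (K + 1)) := by simp [Finset.sum_const, mul_comm]
      _ ≤ (K + 1) * (n / (K + 1)) := Nat.mul_le_mul_right _ (by omega)
      _ ≤ n := by rw [mul_comm]; exact Nat.div_mul_le_self _ _
  set parts : ((i : Fin K) → Fin (M i + 1)) → Multiset ℕ := fun f =>
    (∑ i : Fin K, Multiset.replicate (f i : ℕ) (p ^ ((i : ℕ) + 1))) +
      Multiset.replicate (n - S f) 1 with hparts
  have hsum : ∀ f, (parts f).sum = n := by
    intro f
    rw [hparts]
    simp only [Multiset.sum_add]
    rw [← Multiset.coe_sumAddMonoidHom, map_sum]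
    simp only [Multiset.coe_sumAddMonoidHom, Multiset.sum_replicate, smul_eq_mul, mul_one]
    have h1 := hSle f
    have h0 : ∑ i : Fin K, (f i : ℕ) * p ^ ((i : ℕ) + 1) = S f := rfl
    rw [h0]
    omega
  have hpos : ∀ f, ∀ i ∈ parts f, 0 < i := by
    intro f i hi
    rw [hparts] at hi
    rcases Multiset.mem_add.mp hi with h | h
    · obtain ⟨j, _, hj⟩ := Multiset.mem_sum.mp h
      rw [Multiset.eq_of_mem_replicate hj]
      positivity
    · rw [Multiset.eq_of_mem_replicate h]; omega
  have hpow : ∀ f, ∀ i ∈ parts f, ∃ k : ℕ, i = p ^ k := by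
    intro f i hi
    rw [hparts] at hi
    rcases Multiset.mem_add.mp hi with h | h
    · obtain ⟨j, _, hj⟩ := Multiset.mem_sum.mp h
      exact ⟨(j : ℕ) + 1, Multiset.eq_of_mem_replicate hj⟩
    · exact ⟨0, by rw [Multiset.eq_of_mem_replicate h, pow_zero]⟩
  have hcount : ∀ f (j : Fin K), (parts f).count (p ^ ((j : ℕ) + 1)) = f j := by
    intro f j
    rw [hparts]
    simp only [Multiset.count_add, Multiset.count_sum']
    have h1 : (Multiset.replicate (n - S f) 1).count (p ^ ((j : ℕ) + 1)) = 0 := by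
      rw [Multiset.count_replicate, if_neg]
      intro h
      have := Nat.one_lt_two_pow_iff (n := (j : ℕ) + 1)
      have hgt : 1 < p ^ ((j : ℕ) + 1) := Nat.one_lt_pow (by omega) (by omega)
      omega
    rw [h1, add_zero, Finset.sum_eq_single j]
    · rw [Multiset.count_replicate, if_pos rfl]
    · intro i _ hij
      rw [Multiset.count_replicate, if_neg]
      intro h
      exact hij (Fin.ext (by have := Nat.pow_right_injective hp h; omega))
    · simp
  have key : Nat.card ((i : Fin K) → Fin (M i + 1)) ≤ pPowerPartitions p n := by
    refine Nat.card_le_card_of_injective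
      (fun f => (⟨⟨parts f, fun {i} hi => hpos f i hi, hsum f⟩, hpow f⟩ :
        {P : n.Partition // ∀ i ∈ P.parts, ∃ k : ℕ, i = p ^ k})) ?_
    intro f f' h
    have hpe : parts f = parts f' := congrArg (fun P => P.1.parts) h
    funext j
    apply Fin.ext
    rw [← hcount f j, ← hcount f' j, hpe]
  calc ∏ i ∈ Finset.range K, (n / ((K + 1) * p ^ (i + 1)) + 1)
      = Nat.card ((i : Fin K) → Fin (M i + 1)) := by
        rw [Nat.card_pi]
        simp [hM, Fin.prod_univ_eq_prod_range (fun i => n / ((K + 1) * p ^ (i + 1)) + 1) K]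
    _ ≤ pPowerPartitions p n := key

lemma aux1 {L : ℝ} (hL : 0 < L) : max 1 L ≤ 3 * max 1 (Real.log L * L) := by
  rcases le_or_gt L 3 with h | h
  · calc max 1 L ≤ 3 := max_le (by norm_num) h
    _ ≤ 3 * max 1 (Real.log L * L) := by
        nlinarith [le_max_left 1 (Real.log L * L)]
  · have h1 : 1 < Real.log L := by
      have : Real.exp 1 < 3 := by
        have := Real.exp_one_lt_d9; norm_num at this ⊢; linarith
      calc 1 = Real.log (Real.exp 1) := (Real.log_exp 1).symm
      _ < Real.log L := Real.log_lt_log (Real.exp_pos 1) (by linarith)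
    have h2 : L ≤ Real.log L * L := by nlinarith
    calc max 1 L = L := max_eq_right (by linarith)
    _ ≤ max 1 (Real.log L * L) := le_trans h2 (le_max_right _ _)
    _ ≤ 3 * max 1 (Real.log L * L) := by nlinarith [le_max_left 1 (Real.log L * L)]

lemma aux2 {L : ℝ} (hL : 0 < L) : L * max 1 (Real.log L) ≤ 3 * max 1 (Real.log L * L) := by
  rcases le_or_gt (Real.log L) 1 with h | h
  · calc L * max 1 (Real.log L) = L := by rw [max_eq_left h, mul_one]
    _ ≤ max 1 L := le_max_right _ _
    _ ≤ 3 * max 1 (Real.log L * L) := aux1 hL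
  · calc L * max 1 (Real.log L) = Real.log L * L := by rw [max_eq_right h.le]; ring
    _ ≤ max 1 (Real.log L * L) := le_max_right _ _
    _ ≤ 3 * max 1 (Real.log L * L) := by nlinarith [le_max_left 1 (Real.log L * L)]

lemma aux3 {q L x : ℝ} (hq : 0 < q) (hx : 0 ≤ x) (hL : 0 ≤ L) (hqx : q * x ≤ L) :
    Real.log (x + 1) ≤ (1 + Real.log (1 + 1/q)) * max 1 (Real.log L) := by
  have h1q : (0:ℝ) < 1 + 1/q := by positivity
  have hlog1q : 0 ≤ Real.log (1 + 1/q) := Real.log_nonneg (by nlinarith [one_div_pos.mpr hq])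
  have hmax : (1:ℝ) ≤ max 1 (Real.log L) := le_max_left _ _
  rcases le_or_gt L 1 with h | h
  · have hx1 : x ≤ 1/q := by rw [le_div_iff₀ hq]; nlinarith
    calc Real.log (x + 1) ≤ Real.log (1 + 1/q) := Real.log_le_log (by linarith) (by linarith)
    _ ≤ (1 + Real.log (1 + 1/q)) * 1 := by linarith
    _ ≤ (1 + Real.log (1 + 1/q)) * max 1 (Real.log L) := by
        apply mul_le_mul_of_nonneg_left hmax; linarith
  · have hx1 : x + 1 ≤ L * (1 + 1/q) := by
      have : x ≤ L / q := by rw [le_div_iff₀ hq]; nlinarith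
      have hLq : L / q = L * (1/q) := by ring
      nlinarith
    calc Real.log (x + 1) ≤ Real.log (L * (1 + 1/q)) :=
          Real.log_le_log (by linarith) hx1
    _ = Real.log L + Real.log (1 + 1/q) := Real.log_mul (by linarith) (by linarith)
    _ ≤ max 1 (Real.log L) + Real.log (1 + 1/q) * max 1 (Real.log L) := by
        have h1 : Real.log L ≤ max 1 (Real.log L) := le_max_right _ _
        nlinarith
    _ = (1 + Real.log (1 + 1/q)) * max 1 (Real.log L) := by ring

set_option maxHeartbeats 1000000 in
/-- `log (dim R_n) = (1/(2 log p)) (log n)^2 + O(log log n · log n)`. -/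
theorem stmt4 (p : ℕ) (hp : p.Prime) : ∃ C : ℝ, ∀ n : ℕ, 2 ≤ n →
    |Real.log (pPowerPartitions p n) - (Real.log n) ^ 2 / (2 * Real.log p)| ≤
      C * max 1 (Real.log (Real.log n) * Real.log n) := by
  have hp2 : 2 ≤ p := hp.two_le
  set q := Real.log p with hqdef
  have hq : 0 < q := Real.log_pos (by exact_mod_cast hp.one_lt)
  have hc2q : Real.log 2 ≤ q := Real.log_le_log (by norm_num) (by exact_mod_cast hp2)
  have hlog2 : (0:ℝ) < Real.log 2 := Real.log_pos (by norm_num)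
  refine ⟨3 * (q + 3/2) + 3 * (1 + Real.log (1 + 1/q)) / q + (3 + q) / 2, ?_⟩
  intro n hn
  set K := Nat.log p n with hKdef
  set L := Real.log n with hLdef
  set b := pPowerPartitions p n with hbdef
  have hn0 : (0:ℝ) < n := by positivity
  have hn2 : (2:ℝ) ≤ n := by exact_mod_cast hn
  have hL0 : 0 < L := lt_of_lt_of_le hlog2 (Real.log_le_log (by norm_num) hn2)
  have hpK : ∀ i : ℕ, (0:ℝ) < (p:ℝ) ^ i := by
    intro i; positivity
  have hqK : q * K ≤ L := by
    have h1 : (p:ℝ) ^ K ≤ n := by exact_mod_cast Nat.pow_log_le_self p (by omega)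
    have h2 := Real.log_le_log (hpK K) h1
    rwa [Real.log_pow, mul_comm] at h2
  have hLqK : L ≤ q * (K + 1) := by
    have h1 : (n:ℝ) ≤ (p:ℝ) ^ (K + 1) := by
      exact_mod_cast (Nat.lt_pow_succ_log_self (by omega) n).le
    have h2 := Real.log_le_log hn0 h1
    rwa [Real.log_pow, mul_comm, Nat.cast_add, Nat.cast_one] at h2
  -- b ≥ 1
  have hb1 : 1 ≤ b := by
    refine le_trans ?_ (ppp_lower p n hp2 (by omega))
    exact Nat.one_le_iff_ne_zero.mpr (Nat.pos_iff_ne_zero.mp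
      (Finset.prod_pos (fun i _ => Nat.succ_pos _)))
  have hb0 : (0:ℝ) < b := by exact_mod_cast hb1
  -- Gauss sums
  have gauss : ∀ m : ℕ, ∑ i ∈ Finset.range m, (i:ℝ) = m * (m - 1) / 2 := by
    intro m
    induction m with
    | zero => simp
    | succ k ih => rw [Finset.sum_range_succ, ih]; push_cast; ring
  ------------------------------------------------------------------
  -- Upper bound
  ------------------------------------------------------------------
  have hup : Real.log b ≤ (K + 1) * (Real.log 2 + L) - q * (K * (K + 1)) / 2 := by
    have h1 : Real.log b ≤
        Real.log ((∏ i ∈ Finset.range (K + 1), (n / p ^ i + 1) : ℕ)) := by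
      apply Real.log_le_log hb0
      exact_mod_cast ppp_upper p n hp2 (by omega)
    have h2 : Real.log ((∏ i ∈ Finset.range (K + 1), (n / p ^ i + 1) : ℕ)) =
        ∑ i ∈ Finset.range (K + 1), Real.log ((n / p ^ i + 1 : ℕ) : ℝ) := by
      rw [Nat.cast_prod]
      exact Real.log_prod (fun i _ => by positivity)
    have h3 : ∀ i ∈ Finset.range (K + 1),
        Real.log ((n / p ^ i + 1 : ℕ) : ℝ) ≤ Real.log 2 + L - i * q := by
      intro i hi
      have hiK : i ≤ K := by simpa [Nat.lt_succ_iff] using hi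
      have hpin : (p:ℝ) ^ i ≤ n := by
        have : p ^ i ≤ n := le_trans (Nat.pow_le_pow_right (by omega) hiK)
          (Nat.pow_log_le_self p (by omega))
        exact_mod_cast this
      have hcast : ((n / p ^ i + 1 : ℕ) : ℝ) ≤ 2 * ((n:ℝ) / (p:ℝ) ^ i) := by
        push_cast
        have h4 : ((n / p ^ i : ℕ) : ℝ) ≤ (n:ℝ) / (p:ℝ) ^ i := by
          have := Nat.cast_div_le (α := ℝ) (m := n) (n := p ^ i)
          push_cast at this; exact this
        have h5 : (1:ℝ) ≤ (n:ℝ) / (p:ℝ) ^ i := by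
          rw [le_div_iff₀ (hpK i)]; linarith
        linarith
      calc Real.log ((n / p ^ i + 1 : ℕ) : ℝ) ≤ Real.log (2 * ((n:ℝ) / (p:ℝ) ^ i)) :=
            Real.log_le_log (by positivity) hcast
      _ = Real.log 2 + L - i * q := by
          rw [Real.log_mul (by norm_num) (by positivity),
            Real.log_div (by positivity) (by positivity), Real.log_pow]
          ring
    have h4 : ∑ i ∈ Finset.range (K + 1), (Real.log 2 + L - i * q) =
        (K + 1) * (Real.log 2 + L) - q * (K * (K + 1)) / 2 := by
      rw [Finset.sum_sub_distrib, Finset.sum_const, Finset.card_range, ← Finset.sum_mul,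
        gauss (K + 1)]
      push_cast
      ring
    calc Real.log b ≤ _ := h1
    _ = _ := h2
    _ ≤ ∑ i ∈ Finset.range (K + 1), (Real.log 2 + L - i * q) := Finset.sum_le_sum h3
    _ = _ := h4
  ------------------------------------------------------------------
  -- Lower bound
  ------------------------------------------------------------------
  set c := Real.log ((K:ℝ) + 1) with hcdef
  set A := L - c with hAdef
  have hc0 : 0 ≤ c := Real.log_nonneg (by push_cast; linarith [Nat.cast_nonneg (α := ℝ) K])
  have hcL : c ≤ L := by
    have h1 : (K:ℝ) + 1 ≤ n := by
      have h2 : K + 1 ≤ p ^ K := Nat.succ_le_of_lt (Nat.lt_pow_self (n := K) (by omega : 1 < p))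
      have h3 : p ^ K ≤ n := Nat.pow_log_le_self p (by omega)
      exact_mod_cast le_trans h2 h3
    exact Real.log_le_log (by positivity) h1
  have hA0 : 0 ≤ A := by rw [hAdef]; linarith
  have hlow : A ^ 2 / (2 * q) - (L + q) / 2 ≤ Real.log b := by
    set M : ℕ → ℕ := fun i => n / ((K + 1) * p ^ (i + 1)) with hMdef
    have hterm : ∀ i ∈ Finset.range K, max 0 (A - (i + 1) * q) ≤ Real.log ((M i + 1 : ℕ) : ℝ) := by
      intro i _
      apply max_le
      · apply Real.log_nonneg; push_cast; linarith [Nat.cast_nonneg (α := ℝ) (M i)]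
      · have hD : (0:ℝ) < ((K:ℝ) + 1) * (p:ℝ) ^ (i + 1) := by positivity
        have hnat : n < (M i + 1) * ((K + 1) * p ^ (i + 1)) := by
          have hd0 : 0 < (K + 1) * p ^ (i + 1) := by positivity
          have h1 := Nat.div_add_mod n ((K + 1) * p ^ (i + 1))
          have h2 := Nat.mod_lt n hd0
          have h3 : (M i + 1) * ((K + 1) * p ^ (i + 1)) =
              ((K + 1) * p ^ (i + 1)) * (n / ((K + 1) * p ^ (i + 1))) +
                ((K + 1) * p ^ (i + 1)) := by rw [hMdef]; ring
          omega
        have hreal : (n:ℝ) / (((K:ℝ) + 1) * (p:ℝ) ^ (i + 1)) ≤ ((M i + 1 : ℕ) : ℝ) := by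
          rw [div_le_iff₀ hD]
          exact_mod_cast hnat.le
        have h3 : A - (i + 1) * q = Real.log ((n:ℝ) / (((K:ℝ) + 1) * (p:ℝ) ^ (i + 1))) := by
          rw [Real.log_div (by positivity) (by positivity),
            Real.log_mul (by positivity) (by positivity), Real.log_pow]
          push_cast
          rw [hAdef, hcdef]
          ring
        rw [h3]
        exact Real.log_le_log (by positivity) hreal
    have hchain : ∑ i ∈ Finset.range K, max 0 (A - (i + 1) * q) ≤ Real.log b := by
      have h1 : Real.log ((∏ i ∈ Finset.range K, (M i + 1) : ℕ)) ≤ Real.log b := by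
        apply Real.log_le_log (by positivity)
        exact_mod_cast ppp_lower p n hp2 (by omega)
      have h2 : Real.log ((∏ i ∈ Finset.range K, (M i + 1) : ℕ)) =
          ∑ i ∈ Finset.range K, Real.log ((M i + 1 : ℕ) : ℝ) := by
        rw [Nat.cast_prod]
        exact Real.log_prod (fun i _ => by positivity)
      calc ∑ i ∈ Finset.range K, max 0 (A - (i + 1) * q)
          ≤ ∑ i ∈ Finset.range K, Real.log ((M i + 1 : ℕ) : ℝ) := Finset.sum_le_sum hterm
      _ = _ := h2.symm
      _ ≤ _ := h1
    set J := min K (Nat.floor (A / q)) with hJdef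
    have hJK : J ≤ K := min_le_left _ _
    have hqJA : q * J ≤ A := by
      have h1 : (J:ℝ) ≤ Nat.floor (A / q) := by
        exact_mod_cast min_le_right K (Nat.floor (A / q))
      have h2 : (Nat.floor (A / q) : ℝ) ≤ A / q := Nat.floor_le (by positivity)
      have := le_trans h1 h2
      rw [le_div_iff₀ hq] at this
      linarith
    have hAqJ : A ≤ q * J + q := by
      rcases le_or_gt (Nat.floor (A / q)) K with h | h
      · have hJ : J = Nat.floor (A / q) := min_eq_right h
        have h1 : A / q < Nat.floor (A / q) + 1 := Nat.lt_floor_add_one _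
        rw [← hJ] at h1
        have := (div_lt_iff₀ hq).mp h1
        nlinarith
      · have hJ : J = K := min_eq_left h.le
        rw [hJ]
        have : A ≤ L := by rw [hAdef]; linarith
        nlinarith
    have hqJL : q * J ≤ L := by
      have : (J:ℝ) ≤ K := by exact_mod_cast hJK
      nlinarith
    have hsum2 : J * A - q * (J * (J + 1)) / 2 ≤
        ∑ i ∈ Finset.range K, max 0 (A - (i + 1) * q) := by
      have hsub : ∑ i ∈ Finset.range J, max 0 (A - (i + 1) * q) ≤
          ∑ i ∈ Finset.range K, max 0 (A - (i + 1) * q) :=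
        Finset.sum_le_sum_of_subset_of_nonneg
          (Finset.range_subset_range.mpr hJK) (fun i _ _ => le_max_left _ _)
      have heq : ∑ i ∈ Finset.range J, max 0 (A - (i + 1) * q) =
          ∑ i ∈ Finset.range J, (A - (i + 1) * q) := by
        apply Finset.sum_congr rfl
        intro i hi
        apply max_eq_right
        have hiJ : (i:ℝ) + 1 ≤ J := by
          have : i < J := Finset.mem_range.mp hi
          exact_mod_cast Nat.succ_le_of_lt this
        nlinarith
      have hval : ∑ i ∈ Finset.range J, (A - ((i:ℝ) + 1) * q) =
          J * A - q * (J * (J + 1)) / 2 := by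
        rw [Finset.sum_sub_distrib, Finset.sum_const, Finset.card_range, ← Finset.sum_mul,
          Finset.sum_add_distrib, Finset.sum_const, Finset.card_range, gauss J]
        push_cast
        ring
      linarith [le_trans (le_of_eq hval.symm) (le_trans (le_of_eq heq.symm) hsub)]
    have hquad : A ^ 2 / (2 * q) - (L + q) / 2 ≤ J * A - q * (J * (J + 1)) / 2 := by
      have h2q : (0:ℝ) < 2 * q := by linarith
      have hkey : A ^ 2 ≤ (J * A - q * (J * (J + 1)) / 2 + (L + q) / 2) * (2 * q) := by
        have e1 : (A - q * J) ^ 2 ≤ q ^ 2 := by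
          have t1 : 0 ≤ A - q * J := by linarith
          have t2 : A - q * J ≤ q := by linarith
          nlinarith
        have e2 : q * (q * J) ≤ q * L := mul_le_mul_of_nonneg_left hqJL hq.le
        nlinarith [e1, e2]
      have := (div_le_iff₀ h2q).mpr hkey
      linarith
    linarith
  ------------------------------------------------------------------
  -- Assembly
  ------------------------------------------------------------------
  set Mx := max 1 (Real.log L * L) with hMx
  have hMx1 : (1:ℝ) ≤ Mx := le_max_left _ _
  have hm3 : max 1 L ≤ 3 * Mx := aux1 hL0
  have hL3 : L ≤ 3 * Mx := le_trans (le_max_right 1 L) hm3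
  have hcbound : c ≤ (1 + Real.log (1 + 1/q)) * max 1 (Real.log L) := by
    rw [hcdef]
    exact aux3 hq (Nat.cast_nonneg K) hL0.le hqK
  have hlog1q : 0 ≤ Real.log (1 + 1/q) := Real.log_nonneg (by
    have : 0 < 1/q := by positivity
    linarith)
  have hLc : L * c ≤ 3 * (1 + Real.log (1 + 1/q)) * Mx := by
    calc L * c ≤ L * ((1 + Real.log (1 + 1/q)) * max 1 (Real.log L)) := by
          apply mul_le_mul_of_nonneg_left hcbound hL0.le
    _ = (1 + Real.log (1 + 1/q)) * (L * max 1 (Real.log L)) := by ring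
    _ ≤ (1 + Real.log (1 + 1/q)) * (3 * Mx) := by
        apply mul_le_mul_of_nonneg_left (aux2 hL0) (by linarith)
    _ = 3 * (1 + Real.log (1 + 1/q)) * Mx := by ring
  rw [abs_le]
  constructor
  · -- lower:  -(C * Mx) ≤ log b - L²/(2q)
    have h1 : L ^ 2 / (2 * q) - Real.log b ≤ L * c / q + (L + q) / 2 := by
      have h2 : (L ^ 2 - 2 * L * c) / (2 * q) ≤ A ^ 2 / (2 * q) := by
        apply div_le_div_of_nonneg_right ?_ (by linarith)
        · nlinarith [sq_nonneg c]
      have h3 : (L ^ 2 - 2 * L * c) / (2 * q) = L ^ 2 / (2 * q) - L * c / q := by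
        field_simp
      linarith
    have h4 : L * c / q ≤ 3 * (1 + Real.log (1 + 1/q)) / q * Mx := by
      rw [div_le_iff₀ hq]
      calc L * c ≤ 3 * (1 + Real.log (1 + 1/q)) * Mx := hLc
      _ = 3 * (1 + Real.log (1 + 1/q)) / q * Mx * q := by field_simp
    have h5 : (L + q) / 2 ≤ (3 + q) / 2 * Mx := by
      have e1 : q * 1 ≤ q * Mx := mul_le_mul_of_nonneg_left hMx1 hq.le
      nlinarith [e1, hL3]
    have h6 : (0:ℝ) ≤ 3 * (q + 3/2) * Mx :=
      mul_nonneg (by linarith) (by linarith)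
    linarith
  · -- upper: log b - L²/(2q) ≤ C * Mx
    have h1 : Real.log b - L ^ 2 / (2 * q) ≤ (q + 3/2) * max 1 L := by
      have h2q : (0:ℝ) < 2 * q := by linarith
      have hm1 : (1:ℝ) ≤ max 1 L := le_max_left _ _
      have hmL : L ≤ max 1 L := le_max_right _ _
      have hkey : ((K + 1) * (Real.log 2 + L) - q * (K * (K + 1)) / 2
          - (q + 3/2) * max 1 L) * (2 * q) ≤ L ^ 2 := by
        have hKr : (0:ℝ) ≤ K := Nat.cast_nonneg K
        have e1 : (0:ℝ) ≤ (L - q * K) ^ 2 := sq_nonneg _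
        have e2 : q * (q * K) ≤ q * L := mul_le_mul_of_nonneg_left hqK hq.le
        have e3 : q * L ≤ q * max 1 L := mul_le_mul_of_nonneg_left hmL hq.le
        have e4 : q * q * 1 ≤ q * q * max 1 L :=
          mul_le_mul_of_nonneg_left hm1 (mul_nonneg hq.le hq.le)
        have e5 : q * (Real.log 2 * K) ≤ q * (q * K) :=
          mul_le_mul_of_nonneg_left (mul_le_mul_of_nonneg_right hc2q hKr) hq.le
        have e6 : q * Real.log 2 ≤ q * q := mul_le_mul_of_nonneg_left hc2q hq.le
        nlinarith [e1, e2, e3, e4, e5, e6]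
      have := (le_div_iff₀ h2q).mpr hkey
      linarith
    have h2 : (q + 3/2) * max 1 L ≤ 3 * (q + 3/2) * Mx := by
      have := mul_le_mul_of_nonneg_left hm3 (by linarith : (0:ℝ) ≤ q + 3/2)
      linarith
    have h3 : 0 ≤ 3 * (1 + Real.log (1 + 1/q)) / q * Mx :=
      mul_nonneg (by positivity) (by linarith)
    have h4 : 0 ≤ (3 + q) / 2 * Mx := mul_nonneg (by linarith) (by linarith)
    linarith
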